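/- For all integers k and k′, the loop operators on the evaluation representation satisfy X⁺(k+1) X⁺(k′) − (r s^{−1}) X⁺(k′) X⁺(k+1) = −( X⁺(k′+1) X⁺(k) − (r s^{−1}) X⁺(k) X⁺(k′+1) ) as operators on V = ℂ^{n+1}. (This is relation (D6) of the Drinfeld realization of U_{r,s}(ŝl₂) for the positive loop generators, verified on the evaluation representation V_n(a).) -/
import Mathlib

/-- The two-parameter quantum integer `[m] = (r^m - s^m)/(r - s)`. -/
noncomputable def qint (r s : ℂ) (m : ℕ) : ℂ := (r ^ m - s ^ m) / (r - s)

/-- The loop operator `X⁺(k)` on `V = ℂ^{n+1}`,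
`X⁺(k) v_i = a^k s^{−nk} (r s⁻¹)^{−ki} [n+1−i] v_{i−1}` (with `v_{-1} = 0`). -/
noncomputable def Xp (n : ℕ) (r s a : ℂ) (k : ℤ) : Matrix (Fin (n + 1)) (Fin (n + 1)) ℂ :=
  Matrix.of fun j i =>
    if (j : ℕ) + 1 = (i : ℕ) then
      a ^ k * s ^ (-(n : ℤ) * k) * (r * s⁻¹) ^ (-(k * (i : ℤ))) * qint r s (n + 1 - (i : ℕ))
    else 0

lemma Xp_mul_apply (n : ℕ) (r s a : ℂ) (k k' : ℤ) (j i : Fin (n + 1)) :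
    (Xp n r s a k * Xp n r s a k') j i =
      if (j : ℕ) + 2 = (i : ℕ) then
        (a ^ k * s ^ (-(n : ℤ) * k) * (r * s⁻¹) ^ (-(k * ((j : ℤ) + 1))) * qint r s (n - (j : ℕ))) *
        (a ^ k' * s ^ (-(n : ℤ) * k') * (r * s⁻¹) ^ (-(k' * (i : ℤ))) * qint r s (n + 1 - (i : ℕ)))
      else 0 := by
  rw [Matrix.mul_apply]
  split
  case isTrue h =>
    have hj : (j : ℕ) + 1 < n + 1 := by omega
    rw [Finset.sum_eq_single (⟨(j : ℕ) + 1, hj⟩ : Fin (n + 1))]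
    · simp only [Xp, Matrix.of_apply]
      rw [if_pos trivial, if_pos (show (j : ℕ) + 1 + 1 = (i : ℕ) from by omega)]
      have e1 : n + 1 - ((j : ℕ) + 1) = n - (j : ℕ) := by omega
      have e2 : (((j : ℕ) + 1 : ℕ) : ℤ) = (j : ℤ) + 1 := by push_cast; ring
      rw [e1, e2]
    · intro b _ hb
      rw [Xp, Matrix.of_apply, if_neg, zero_mul]
      intro hc
      exact hb (Fin.ext (by simpa using hc.symm))
    · intro hmem
      exact absurd (Finset.mem_univ _) hmem
  case isFalse h =>
    apply Finset.sum_eq_zero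
    intro b _
    simp only [Xp, Matrix.of_apply]
    split_ifs with h1 h2
    · omega
    · rw [mul_zero]
    · rw [zero_mul]
    · rw [zero_mul]

lemma key_prod (a s q Q1 Q2 : ℂ) (ha : a ≠ 0) (hs : s ≠ 0) (hq : q ≠ 0) (n j : ℤ)
    (u v : ℤ) :
    a ^ u * s ^ (-n * u) * q ^ (-(u * (j + 1))) * Q1 *
      (a ^ v * s ^ (-n * v) * q ^ (-(v * (j + 2))) * Q2)
    = a ^ (u + v) * s ^ (-n * (u + v)) * q ^ (-((u + v) * (j + 2))) * Q1 * Q2 * q ^ u := by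
  have h1 : a ^ (u + v) = a ^ u * a ^ v := zpow_add₀ ha u v
  have h2 : s ^ (-n * (u + v)) = s ^ (-n * u) * s ^ (-n * v) := by
    rw [← zpow_add₀ hs]; ring_nf
  have h3 : q ^ (-((u + v) * (j + 2))) * q ^ u = q ^ (-(u * (j + 1))) * q ^ (-(v * (j + 2))) := by
    rw [← zpow_add₀ hq, ← zpow_add₀ hq]; ring_nf
  rw [h1, h2]
  linear_combination -(a ^ u * a ^ v * s ^ (-n * u) * s ^ (-n * v) * Q1 * Q2) * h3

lemma key (a s q Q1 Q2 : ℂ) (ha : a ≠ 0) (hs : s ≠ 0) (hq : q ≠ 0) (n j k k' : ℤ) :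
    a ^ (k + 1) * s ^ (-n * (k + 1)) * q ^ (-((k + 1) * (j + 1))) * Q1 *
      (a ^ k' * s ^ (-n * k') * q ^ (-(k' * (j + 2))) * Q2)
    - q * (a ^ k' * s ^ (-n * k') * q ^ (-(k' * (j + 1))) * Q1 *
      (a ^ (k + 1) * s ^ (-n * (k + 1)) * q ^ (-((k + 1) * (j + 2))) * Q2))
    = -(a ^ (k' + 1) * s ^ (-n * (k' + 1)) * q ^ (-((k' + 1) * (j + 1))) * Q1 *
      (a ^ k * s ^ (-n * k) * q ^ (-(k * (j + 2))) * Q2)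
    - q * (a ^ k * s ^ (-n * k) * q ^ (-(k * (j + 1))) * Q1 *
      (a ^ (k' + 1) * s ^ (-n * (k' + 1)) * q ^ (-((k' + 1) * (j + 2))) * Q2))) := by
  rw [key_prod a s q Q1 Q2 ha hs hq n j (k + 1) k',
      key_prod a s q Q1 Q2 ha hs hq n j k' (k + 1),
      key_prod a s q Q1 Q2 ha hs hq n j (k' + 1) k,
      key_prod a s q Q1 Q2 ha hs hq n j k (k' + 1)]
  have e1 : (k + 1) + k' = k + k' + 1 := by ring
  have e2 : k' + (k + 1) = k + k' + 1 := by ring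
  have e3 : (k' + 1) + k = k + k' + 1 := by ring
  have e4 : k + (k' + 1) = k + k' + 1 := by ring
  rw [e1, e2, e3, e4]
  have hk : q ^ (k + 1) = q * q ^ k := by
    rw [zpow_add₀ hq, zpow_one]; ring
  have hk' : q ^ (k' + 1) = q * q ^ k' := by
    rw [zpow_add₀ hq, zpow_one]; ring
  rw [hk, hk']
  ring

theorem D6_positive_on_evaluation (n : ℕ) (r s a : ℂ) (hr : r ≠ 0) (hs : s ≠ 0) (ha : a ≠ 0)
    (hrs : r ≠ s) (k k' : ℤ) :
    Xp n r s a (k + 1) * Xp n r s a k' - (r * s⁻¹) • (Xp n r s a k' * Xp n r s a (k + 1))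
      = -(Xp n r s a (k' + 1) * Xp n r s a k
          - (r * s⁻¹) • (Xp n r s a k * Xp n r s a (k' + 1))) := by
  have hq : r * s⁻¹ ≠ 0 := mul_ne_zero hr (inv_ne_zero hs)
  ext j i
  simp only [Matrix.sub_apply, Matrix.neg_apply, Matrix.smul_apply, Xp_mul_apply, smul_eq_mul]
  split_ifs with h
  · have hi : (i : ℤ) = (j : ℤ) + 2 := by omega
    rw [hi]
    exact key a s (r * s⁻¹) (qint r s (n - (j : ℕ))) (qint r s (n + 1 - (i : ℕ)))
      ha hs hq (n : ℤ) (j : ℤ) k k'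
  · simp
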